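/- (Suffix comparison via the inverse Lyndon array.) Let 1 ≤ i ≤ n, let m = λ⁻¹[i], let z = x[i..i+m−1] be the maximal inverse Lyndon subword starting at i, assume i + m − 1 < n, and let b = border(z). Then: (1) for every k with i < k < i + m − b, x_i ≻ x_k; and (2) x_i ≺ x_{i+m−b}. -/

import Mathlib

namespace LynArr

variable {α : Type*} [LinearOrder α]

/-- Strict lexicographic order on words:
`u ≺ v` iff `u` is a proper prefix of `v`, or at the first differing position `u` is smaller. -/
def Llt (u v : List α) : Prop := List.Lex (· < ·) u v

/-- The suffix `x_i = x[i..n]` (1-based indexing). -/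
def suff (x : List α) (i : ℕ) : List α := x.drop (i - 1)

/-- The subword `x[i..j]` (1-based, inclusive). -/
def sub (x : List α) (i j : ℕ) : List α := (x.drop (i - 1)).take (j - i + 1)

/-- `w` is a Lyndon word: nonempty and lexicographically smaller than
all of its nonempty proper suffixes. -/
def IsLyndon (w : List α) : Prop :=
  w ≠ [] ∧ ∀ k, 0 < k → k < w.length → Llt w (w.drop k)

/-- `w` is an inverse Lyndon word: nonempty and lexicographically greater than
all of its nonempty proper suffixes. -/
def IsInvLyndon (w : List α) : Prop :=
  w ≠ [] ∧ ∀ k, 0 < k → k < w.length → Llt (w.drop k) w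

/-- `lce x i j`: the length of the longest common prefix of the suffixes `x_i` and `x_j`. -/
def lce (x : List α) (i j : ℕ) : ℕ :=
  (((suff x i).zip (suff x j)).takeWhile fun p => p.1 == p.2).length

/- ### Auxiliary lemmas -/

section LexAux

variable {β : Type*} {r : β → β → Prop}

lemma lex_append_of_rel (p : List β) {a b : β} (u v : List β) (h : r a b) :
    List.Lex r (p ++ a :: u) (p ++ b :: v) := by
  induction p with
  | nil => exact List.Lex.rel h
  | cons y ys ih => exact List.Lex.cons ih

lemma lex_of_take_getElem {u v : List β} (j : ℕ) (h1 : j < u.length) (h2 : j < v.length)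
    (htake : u.take j = v.take j) (hr : r (u[j]'h1) (v[j]'h2)) : List.Lex r u v := by
  have hu : u = u.take j ++ u[j]'h1 :: u.drop (j + 1) := by
    rw [← List.drop_eq_getElem_cons h1, List.take_append_drop]
  have hv : v = v.take j ++ v[j]'h2 :: v.drop (j + 1) := by
    rw [← List.drop_eq_getElem_cons h2, List.take_append_drop]
  rw [hu, hv, htake]
  exact lex_append_of_rel _ _ _ hr

lemma lex_of_append_ne_nil (u : List β) {w : List β} (hw : w ≠ []) :
    List.Lex r u (u ++ w) := by
  induction u with
  | nil =>
    cases w with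
    | nil => exact absurd rfl hw
    | cons a w => exact List.Lex.nil
  | cons a u ih => exact List.Lex.cons ih

lemma lex_decomp {u v : List β} (h : List.Lex r u v) :
    u <+: v ∨ ∃ j, ∃ (h1 : j < u.length) (h2 : j < v.length),
      u.take j = v.take j ∧ r (u[j]'h1) (v[j]'h2) := by
  induction h with
  | nil => exact Or.inl List.nil_prefix
  | @rel a b l₁ l₂ hab => exact Or.inr ⟨0, by simp, by simp, rfl, hab⟩
  | @cons a l₁ l₂ _ ih =>
    rcases ih with hp | ⟨j, h1, h2, ht, hr⟩
    · exact Or.inl (List.cons_prefix_cons.mpr ⟨rfl, hp⟩)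
    · exact Or.inr ⟨j + 1, by simpa using h1, by simpa using h2,
        by simp [List.take_succ_cons, ht], by simpa using hr⟩

lemma getElem_congr_idx {l : List β} {i j : ℕ} (h : i = j) (hi : i < l.length) :
    l[i]'hi = l[j]'(h ▸ hi) := by subst h; rfl

end LexAux

lemma border_getElem {z : List α} {m b j : ℕ} (hz : z.length = m) (hbm : b ≤ m)
    (hbord : z.take b = z.drop (m - b)) (hj : j < b) :
    z[j]'(by omega) = z[m - b + j]'(by omega) := by
  have hlt : j < (z.take b).length := by rw [List.length_take]; omega
  have e := List.getElem_of_eq hbord hlt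
  rw [List.getElem_take] at e
  rw [List.getElem_drop] at e
  exact e

/-- Border chain property for inverse Lyndon words: if `ℓ < b` are both border lengths of
the inverse Lyndon word `z` of length `m`, then `z[b] ≤ z[ℓ]`. -/
lemma border_chain {z : List α} {m ℓ b : ℕ} (hz : z.length = m)
    (hIL : IsInvLyndon z) (hℓb : ℓ < b) (hbm : b < m)
    (hbordℓ : z.take ℓ = z.drop (m - ℓ))
    (hbordb : z.take b = z.drop (m - b)) :
    z[b]'(by omega) ≤ z[ℓ]'(by omega) := by
  have hs := hIL.2 (b - ℓ) (by omega) (by omega)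
  have hsl' : ℓ < (z.drop (b - ℓ)).length := by rw [List.length_drop]; omega
  have hsl : (z.drop (b - ℓ))[ℓ]'hsl' = z[b]'(by omega) := by
    rw [List.getElem_drop]
    exact getElem_congr_idx (by omega) _
  have hagree : ∀ j, (hj : j < ℓ) →
      (z.drop (b - ℓ))[j]'(by rw [List.length_drop]; omega) = z[j]'(by omega) := by
    intro j hj
    rw [List.getElem_drop]
    have e1 := border_getElem (z := z) (m := m) (b := b) (j := b - ℓ + j) hz (by omega)
      hbordb (by omega)
    have e2 := getElem_congr_idx (l := z) (show m - b + (b - ℓ + j) = m - ℓ + j by omega)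
      (by omega)
    have e3 := border_getElem (z := z) (m := m) (b := ℓ) (j := j) hz (by omega) hbordℓ hj
    exact e1.trans (e2.trans e3.symm)
  rcases lex_decomp hs with hp | ⟨j, h1, h2, ht, hr⟩
  · have e := hp.getElem hsl'
    exact le_of_eq (hsl.symm.trans e)
  · rcases lt_trichotomy j ℓ with hjℓ | rfl | hjℓ
    · exact absurd ((hagree j hjℓ).symm.trans_lt hr) (lt_irrefl _)
    · exact le_of_lt (hsl.symm.trans_lt hr)
    · have hℓtake : ℓ < ((z.drop (b - ℓ)).take j).length := by rw [List.length_take]; omega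
      have e := List.getElem_of_eq ht hℓtake
      rw [List.getElem_take, List.getElem_take] at e
      exact le_of_eq (hsl.symm.trans e)

/-- If `z` is inverse Lyndon but `z ++ [c]` is not, then there is a border length `ℓ` of `z`
with `z[ℓ] < c`. -/
lemma exists_border_lt {z : List α} {c : α} {m : ℕ} (hz : z.length = m) (hm1 : 1 ≤ m)
    (hIL : IsInvLyndon z) (hnot : ¬ IsInvLyndon (z ++ [c])) :
    ∃ ℓ, ∃ (h : ℓ < m), z.take ℓ = z.drop (m - ℓ) ∧ z[ℓ]'(hz.symm ▸ h) < c := by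
  unfold IsInvLyndon at hnot
  push_neg at hnot
  obtain ⟨k, hk0, hklen, hk⟩ := hnot (by simp)
  have hkm : k ≤ m := by
    rw [List.length_append, List.length_singleton, hz] at hklen; omega
  have hdropk : (z ++ [c]).drop k = z.drop k ++ [c] :=
    List.drop_append_of_le_length (by omega)
  rcases eq_or_lt_of_le hkm with hkm2 | hkm2
  · -- k = m : the empty border, need z[0] < c
    have hz0 : 0 < z.length := by omega
    refine ⟨0, by omega, by simp [← hz], ?_⟩
    by_contra hcc
    push_neg at hcc
    apply hk
    have hdk : (z ++ [c]).drop k = [c] := by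
      rw [hdropk, List.drop_eq_nil_of_le (by omega), List.nil_append]
    rw [hdk]
    rcases lt_or_eq_of_le hcc with hlt | heq
    · refine lex_of_take_getElem 0 (by simp) (by simp) rfl ?_
      rw [List.getElem_append_left hz0, List.getElem_cons_zero]
      exact hlt
    · have hz' : z = z[0]'hz0 :: z.drop 1 := by
        have := List.drop_eq_getElem_cons hz0
        simpa using this
      have hform : z ++ [c] = [c] ++ (z.drop 1 ++ [c]) := by
        rw [← List.append_assoc]
        congr 1
        rw [heq, List.singleton_append]
        exact hz'
      rw [hform]
      exact lex_of_append_ne_nil _ (by simp)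
  · -- k < m : the border of length m - k
    have hsuf := hIL.2 k hk0 (by omega)
    rcases lex_decomp hsuf with hp | ⟨j, h1, h2, ht, hr⟩
    · -- z.drop k is a prefix of z : border of length m - k
      have hdl : (z.drop k).length = m - k := by rw [List.length_drop, hz]
      have htk : z.drop k = z.take (m - k) := by
        rw [List.prefix_iff_eq_take] at hp
        rw [hp, hdl]
      refine ⟨m - k, by omega, ?_, ?_⟩
      · rw [show m - (m - k) = k by omega]
        exact htk.symm
      · by_contra hcc
        push_neg at hcc
        apply hk
        rw [hdropk, htk]
        rcases lt_or_eq_of_le hcc with hlt | heq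
        · refine lex_of_take_getElem (m - k) ?_ ?_ ?_ ?_
          · rw [List.length_append, List.length_take, List.length_singleton]; omega
          · rw [List.length_append, List.length_singleton]; omega
          · rw [List.take_append_of_le_length (by rw [List.length_take]; omega),
              List.take_append_of_le_length (by omega), List.take_take, min_self]
          · have hltake : (z.take (m - k)).length = m - k := by
              rw [List.length_take]; omega
            have e1 : (z.take (m - k) ++ [c])[m - k]'(by
                rw [List.length_append, hltake, List.length_singleton]; omega) = c := by
              rw [List.getElem_append_right (le_of_eq hltake)]
              simp [hltake]
            have e2 : (z ++ [c])[m - k]'(by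
                rw [List.length_append, List.length_singleton]; omega)
                = z[m - k]'(by omega) := List.getElem_append_left (by omega)
            rw [e1, e2]
            exact hlt
        · have h4 : z.take (m - k) ++ [c] = z.take (m - k + 1) := by
            rw [heq, ← List.take_concat_get (l := z) (i := m - k) (by omega), List.concat_eq_append]
          have h5 : z ++ [c] = (z.take (m - k) ++ [c]) ++ (z.drop (m - k + 1) ++ [c]) := by
            rw [h4, ← List.append_assoc, List.take_append_drop]
          rw [h5]
          exact lex_of_append_ne_nil _ (by simp)
    · -- strict difference inside : contradiction with hk directly
      exfalso
      apply hk
      rw [hdropk]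
      refine lex_of_take_getElem j ?_ ?_ ?_ ?_
      · rw [List.length_append]; omega
      · rw [List.length_append]; omega
      · rw [List.take_append_of_le_length (le_of_lt h1),
          List.take_append_of_le_length (le_of_lt h2), ht]
      · rw [List.getElem_append_left h1, List.getElem_append_left h2]
        exact hr

/-- Suffix comparison via the inverse Lyndon array: with `m = λ⁻¹[i]`,
`z = x[i..i+m-1]` a proper prefix of `x_i`, and `b = border(z)`:
every `k` with `i < k < i + m - b` satisfies `x_i ≻ x_k`, and `x_i ≺ x_{i+m-b}`. -/
theorem suffix_comparison_inverse {α : Type*} [LinearOrder α] (x : List α) (n i m b : ℕ)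
    (hn : n = x.length) (hi1 : 1 ≤ i) (hin : i ≤ n)
    (hm1 : 1 ≤ m) (hm2 : m ≤ n - i + 1)
    (hIL : IsInvLyndon (sub x i (i + m - 1)))
    (hmax : ∀ m', m < m' → m' ≤ n - i + 1 → ¬ IsInvLyndon (sub x i (i + m' - 1)))
    (hproper : i + m - 1 < n)
    (hb1 : b < (sub x i (i + m - 1)).length)
    (hb2 : (sub x i (i + m - 1)).take b =
      (sub x i (i + m - 1)).drop ((sub x i (i + m - 1)).length - b))
    (hb3 : ∀ b', b' < (sub x i (i + m - 1)).length →
      (sub x i (i + m - 1)).take b' =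
        (sub x i (i + m - 1)).drop ((sub x i (i + m - 1)).length - b') → b' ≤ b) :
    (∀ k, i < k → k < i + m - b → Llt (suff x k) (suff x i)) ∧
      Llt (suff x i) (suff x (i + m - b)) := by
  have hxlen : x.length = n := hn.symm
  have him : i + m ≤ n := by omega
  have hslen : (suff x i).length = n - i + 1 := by
    simp only [suff, List.length_drop, hxlen]; omega
  have hzeq : sub x i (i + m - 1) = (suff x i).take m := by
    simp only [sub, suff]; congr 1; omega
  set z : List α := (suff x i).take m with hzdef
  set t : List α := (suff x i).drop m with htdef
  have hzlen : z.length = m := by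
    rw [hzdef, List.length_take]; omega
  have hst : z ++ t = suff x i := List.take_append_drop m (suff x i)
  have htlen : t.length = n - i + 1 - m := by rw [htdef, List.length_drop, hslen]
  have htpos : 0 < t.length := by omega
  have htne : t ≠ [] := List.length_pos_iff.mp htpos
  set c := t.head htne with hcdef
  have htc : t = c :: t.tail := (List.cons_head_tail htne).symm
  rw [hzeq] at hIL hb1 hb2 hb3
  rw [hzlen] at hb1 hb2 hb3
  -- the extension z ++ [c] is not inverse Lyndon
  have hzc : sub x i (i + (m + 1) - 1) = z ++ [c] := by
    have h1 : sub x i (i + (m + 1) - 1) = (suff x i).take (m + 1) := by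
      simp only [sub, suff]; congr 1; omega
    rw [h1, List.take_add, ← hzdef, ← htdef]
    congr 1
    conv_lhs => rw [htc]
    simp
  have hnot := hmax (m + 1) (by omega) (by omega)
  rw [hzc] at hnot
  obtain ⟨ℓ, hℓm, hbordℓ, hcℓ⟩ := exists_border_lt hzlen hm1 hIL hnot
  have hℓb : ℓ ≤ b := hb3 ℓ hℓm hbordℓ
  have hbc : z[b]'(by omega) < c := by
    rcases lt_or_eq_of_le hℓb with h | h
    · exact lt_of_le_of_lt (border_chain hzlen hIL h hb1 hbordℓ hb2) hcℓ
    · subst h; exact hcℓ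
  constructor
  · -- part 1 : every k with i < k < i + m - b satisfies x_k ≺ x_i
    intro k hik hkb
    have hd1 : 1 ≤ k - i := by omega
    have hd2 : k - i < m - b := by omega
    set d := k - i with hddef
    have hsk : suff x k = z.drop d ++ t := by
      have h1 : suff x k = (suff x i).drop d := by
        simp only [suff, List.drop_drop]; congr 1; omega
      rw [h1, ← hst, List.drop_append_of_le_length (by omega)]
    have hlex := hIL.2 d (by omega) (by omega)
    rcases lex_decomp hlex with hp | ⟨j, h1, h2, ht, hr⟩
    · exfalso
      have hdl : (z.drop d).length = m - d := by rw [List.length_drop, hzlen]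
      rw [List.prefix_iff_eq_take, hdl] at hp
      have hb' : z.take (m - d) = z.drop (m - (m - d)) := by
        rw [show m - (m - d) = d by omega]
        exact hp.symm
      have := hb3 (m - d) (by omega) hb'
      omega
    · rw [hsk, ← hst]
      refine lex_of_take_getElem j ?_ ?_ ?_ ?_
      · rw [List.length_append]; omega
      · rw [List.length_append]; omega
      · rw [List.take_append_of_le_length (le_of_lt h1),
          List.take_append_of_le_length (le_of_lt h2), ht]
      · rw [List.getElem_append_left h1, List.getElem_append_left h2]
        exact hr
  · -- part 2 : x_i ≺ x_{i+m-b}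
    have hsuffmb : suff x (i + m - b) = z.take b ++ t := by
      have h1 : suff x (i + m - b) = (suff x i).drop (m - b) := by
        simp only [suff, List.drop_drop]; congr 1; omega
      rw [h1, ← hst, List.drop_append_of_le_length (by omega), ← hb2]
    have key : z ++ t = (z.take b ++ z.drop b) ++ t :=
      congrArg (fun l => l ++ t) (List.take_append_drop b z).symm
    rw [hsuffmb, ← hst, key, List.append_assoc,
      List.drop_eq_getElem_cons (show b < z.length by omega), List.cons_append]
    conv_rhs => rw [htc]
    exact lex_append_of_rel _ _ _ hbc

end LynArr
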